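/- Let N ≥ 2 and a ∈ ℝ. Define ω̄_a(y) = y^1 |y|^{-N/2} |log|y||^a for y in the upper half-space ℝ^N_+ with |y| < 1. Then ω̄_a satisfies the equation -Δω̄_a - (N²/4)|y|^{-2} ω̄_a + a(a-1)|y|^{-2}|log|y||^{-2} ω̄_a = 0 in {y ∈ ℝ^N_+ : 0 < |y| < 1}. -/

import Mathlib

open MeasureTheory Real Filter
open Topology

noncomputable section


noncomputable section

/-- The Euclidean Laplacian `Δu(x) = ∑ᵢ ∂²u/∂(xⁱ)²`. -/
def lap {N : ℕ} (u : EuclideanSpace ℝ (Fin N) → ℝ)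
    (x : EuclideanSpace ℝ (Fin N)) : ℝ :=
  ∑ i, fderiv ℝ (fun y => fderiv ℝ u y (EuclideanSpace.single i 1)) x
    (EuclideanSpace.single i 1)

/-- `ω̄_a(y) = y¹ |y|^{-N/2} |log |y||^a`. -/
def obar {N : ℕ} (hN : 2 ≤ N) (a : ℝ) (y : EuclideanSpace ℝ (Fin N)) : ℝ :=
  y ⟨0, by omega⟩ * ‖y‖ ^ (-(N : ℝ)/2) * |Real.log ‖y‖| ^ a

/-- building block: `t^q * (-log t / 2)^b`. -/
def pw (q b t : ℝ) : ℝ := t ^ q * (-Real.log t / 2) ^ b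

lemma clog_pos {t : ℝ} (h0 : 0 < t) (h1 : t < 1) : 0 < -Real.log t / 2 := by
  have := Real.log_neg h0 h1; linarith

lemma pw_hasDerivAt (q b : ℝ) {t : ℝ} (h0 : 0 < t) (h1 : t < 1) :
    HasDerivAt (pw q b) (q * pw (q-1) b t - b/2 * pw (q-1) (b-1) t) t := by
  have hc := clog_pos h0 h1
  have H1 : HasDerivAt (fun t : ℝ => t ^ q) (q * t ^ (q-1)) t :=
    Real.hasDerivAt_rpow_const (Or.inl h0.ne')
  have Hc : HasDerivAt (fun t : ℝ => -Real.log t / 2) (-t⁻¹ / 2) t :=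
    ((Real.hasDerivAt_log h0.ne').neg).div_const 2
  have H2 : HasDerivAt (fun t : ℝ => (-Real.log t / 2) ^ b)
      ((-t⁻¹/2) * b * (-Real.log t / 2) ^ (b-1)) t :=
    Hc.rpow_const (Or.inl hc.ne')
  have := H1.mul H2
  convert this using 1
  all_goals try rfl
  unfold pw
  rw [Real.rpow_sub_one h0.ne' q]
  field_simp
  ring

def pwd1 (p a t : ℝ) : ℝ := p * pw (p-1) a t - a/2 * pw (p-1) (a-1) t
def pwd2 (p a t : ℝ) : ℝ := p * pwd1 (p-1) a t - a/2 * pwd1 (p-1) (a-1) t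

lemma pw_hasDerivAt' (p a : ℝ) {t : ℝ} (h0 : 0 < t) (h1 : t < 1) :
    HasDerivAt (pw p a) (pwd1 p a t) t := pw_hasDerivAt p a h0 h1

lemma pwd1_hasDerivAt (p a : ℝ) {t : ℝ} (h0 : 0 < t) (h1 : t < 1) :
    HasDerivAt (pwd1 p a) (pwd2 p a t) t :=
  ((pw_hasDerivAt (p-1) a h0 h1).const_mul p).sub
    ((pw_hasDerivAt (p-1) (a-1) h0 h1).const_mul (a/2))

lemma pw_shiftq {q b t : ℝ} (h0 : 0 < t) : pw (q-1) b t = t⁻¹ * pw q b t := by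
  unfold pw; rw [Real.rpow_sub_one h0.ne']; ring

lemma pw_shiftb {q b t : ℝ} (h0 : 0 < t) (h1 : t < 1) :
    pw q (b-1) t = (-Real.log t / 2)⁻¹ * pw q b t := by
  unfold pw; rw [Real.rpow_sub_one (clog_pos h0 h1).ne']; ring

/-- `F(x) = x_{i0} * pw p a (‖x‖²)` -/
def Ff (N : ℕ) (i0 : Fin N) (p a : ℝ) (x : EuclideanSpace ℝ (Fin N)) : ℝ :=
  x i0 * pw p a (‖x‖^2)

/-- first partials of `Ff` -/
def Gf (N : ℕ) (i0 i : Fin N) (p a : ℝ) (x : EuclideanSpace ℝ (Fin N)) : ℝ :=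
  (if i = i0 then (1:ℝ) else 0) * pw p a (‖x‖^2) + 2 * (x i0 * x i * pwd1 p a (‖x‖^2))

section multi
variable {N : ℕ} (i0 i : Fin N) (p a : ℝ) {x : EuclideanSpace ℝ (Fin N)}

lemma norm_sq_mem (h0 : 0 < ‖x‖) (h1 : ‖x‖ < 1) : 0 < ‖x‖^2 ∧ ‖x‖^2 < 1 :=
  ⟨pow_pos h0 2, by nlinarith⟩

lemma hasFDerivAt_normsq : HasFDerivAt (fun x : EuclideanSpace ℝ (Fin N) => ‖x‖^2)
    (2 • (innerSL ℝ x)) x := (hasStrictFDerivAt_norm_sq x).hasFDerivAt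

lemma proj_apply' (j : Fin N) (x : EuclideanSpace ℝ (Fin N)) :
    (EuclideanSpace.proj j : EuclideanSpace ℝ (Fin N) →L[ℝ] ℝ) x = x j := rfl

lemma hasFDerivAt_coord : HasFDerivAt (fun x : EuclideanSpace ℝ (Fin N) => x i0)
    ((EuclideanSpace.proj i0 : EuclideanSpace ℝ (Fin N) →L[ℝ] ℝ)) x :=
  (EuclideanSpace.proj i0 : EuclideanSpace ℝ (Fin N) →L[ℝ] ℝ).hasFDerivAt

lemma Ff_hasFDerivAt (h0 : 0 < ‖x‖) (h1 : ‖x‖ < 1) :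
    HasFDerivAt (Ff N i0 p a)
      (x i0 • (pwd1 p a (‖x‖^2) • (2 • (innerSL ℝ x)))
        + pw p a (‖x‖^2) • (EuclideanSpace.proj i0 : EuclideanSpace ℝ (Fin N) →L[ℝ] ℝ)) x := by
  obtain ⟨ht0, ht1⟩ := norm_sq_mem h0 h1
  have hpw : HasFDerivAt (fun x : EuclideanSpace ℝ (Fin N) => pw p a (‖x‖^2))
      (pwd1 p a (‖x‖^2) • (2 • (innerSL ℝ x))) x :=
    by convert (pw_hasDerivAt' p a ht0 ht1).comp_hasFDerivAt x hasFDerivAt_normsq using 1 <;> rfl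
  exact (hasFDerivAt_coord i0).mul hpw

lemma fderiv_Ff_apply (h0 : 0 < ‖x‖) (h1 : ‖x‖ < 1) :
    fderiv ℝ (Ff N i0 p a) x (EuclideanSpace.single i 1) = Gf N i0 i p a x := by
  rw [(Ff_hasFDerivAt i0 p a h0 h1).fderiv]
  simp only [ContinuousLinearMap.add_apply, ContinuousLinearMap.smul_apply, innerSL_apply_apply,
    EuclideanSpace.inner_single_right, conj_trivial, smul_eq_mul, Gf,
    proj_apply', EuclideanSpace.single_apply, nsmul_eq_mul, Nat.cast_ofNat]
  rcases eq_or_ne i i0 with h | h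
  · subst h; simp; try ring
  · simp [h, Ne.symm h]; try ring

lemma fderiv_Gf_apply (h0 : 0 < ‖x‖) (h1 : ‖x‖ < 1) :
    fderiv ℝ (Gf N i0 i p a) x (EuclideanSpace.single i 1) =
      (if i = i0 then (1:ℝ) else 0) * (pwd1 p a (‖x‖^2) * (2 * x i))
      + 2 * ((x i0 * x i) * (pwd2 p a (‖x‖^2) * (2 * x i))
        + pwd1 p a (‖x‖^2) * (x i0 * 1 + x i * (if i = i0 then (1:ℝ) else 0))) := by
  obtain ⟨ht0, ht1⟩ := norm_sq_mem h0 h1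
  have hpw : HasFDerivAt (fun x : EuclideanSpace ℝ (Fin N) => pw p a (‖x‖^2))
      (pwd1 p a (‖x‖^2) • (2 • (innerSL ℝ x))) x :=
    by convert (pw_hasDerivAt' p a ht0 ht1).comp_hasFDerivAt x hasFDerivAt_normsq using 1 <;> rfl
  have hpw2 : HasFDerivAt (fun x : EuclideanSpace ℝ (Fin N) => pwd1 p a (‖x‖^2))
      (pwd2 p a (‖x‖^2) • (2 • (innerSL ℝ x))) x :=
    by convert (pwd1_hasDerivAt p a ht0 ht1).comp_hasFDerivAt x hasFDerivAt_normsq using 1 <;> rfl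
  have hprod : HasFDerivAt (fun x : EuclideanSpace ℝ (Fin N) => x i0 * x i)
      (x i0 • (EuclideanSpace.proj i : EuclideanSpace ℝ (Fin N) →L[ℝ] ℝ)
        + x i • (EuclideanSpace.proj i0 : EuclideanSpace ℝ (Fin N) →L[ℝ] ℝ)) x :=
    (hasFDerivAt_coord i0).mul (hasFDerivAt_coord i)
  have hG : HasFDerivAt (Gf N i0 i p a)
      ((if i = i0 then (1:ℝ) else 0) • (pwd1 p a (‖x‖^2) • (2 • (innerSL ℝ x)))
        + (2:ℝ) • ((x i0 * x i) • (pwd2 p a (‖x‖^2) • (2 • (innerSL ℝ x)))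
          + pwd1 p a (‖x‖^2) • (x i0 • (EuclideanSpace.proj i : EuclideanSpace ℝ (Fin N) →L[ℝ] ℝ)
            + x i • (EuclideanSpace.proj i0 : EuclideanSpace ℝ (Fin N) →L[ℝ] ℝ)))) x :=
    (hpw.const_mul _).add ((hprod.mul hpw2).const_mul 2)
  rw [hG.fderiv]
  simp only [ContinuousLinearMap.add_apply, ContinuousLinearMap.smul_apply, innerSL_apply_apply,
    EuclideanSpace.inner_single_right, conj_trivial, smul_eq_mul,
    proj_apply', EuclideanSpace.single_apply, nsmul_eq_mul, Nat.cast_ofNat]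
  rcases eq_or_ne i i0 with h | h
  · subst h; simp; try ring
  · simp [h, Ne.symm h]; try ring

end multi

lemma key_algebra (N : ℕ) (a : ℝ) {t : ℝ} (h0 : 0 < t) (h1 : t < 1) :
    (2*(N:ℝ)+4) * pwd1 (-(N:ℝ)/4) a t + 4*t*pwd2 (-(N:ℝ)/4) a t
      = (-((N:ℝ)^2/4) + a*(a-1) * ((-Real.log t/2)⁻¹)^2) * (t⁻¹ * pw (-(N:ℝ)/4) a t) := by
  have hT : t * t⁻¹ = 1 := mul_inv_cancel₀ h0.ne'
  have e0 : pw (-(N:ℝ)/4-1) a t = t⁻¹ * pw (-(N:ℝ)/4) a t := pw_shiftq h0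
  have e1 : pw (-(N:ℝ)/4-1-1) a t = t⁻¹ * (t⁻¹ * pw (-(N:ℝ)/4) a t) := by
    rw [pw_shiftq h0, e0]
  unfold pwd2 pwd1
  simp only [pw_shiftb h0 h1, e0, e1]
  linear_combination (4 * t⁻¹ * ((-(N:ℝ)/4)*((-(N:ℝ)/4)-1)
      - ((-(N:ℝ)/4)*a/2 + a/2*((-(N:ℝ)/4)-1)) * (-Real.log t/2)⁻¹
      + a*(a-1)/4 * ((-Real.log t/2)⁻¹)^2) * pw (-(N:ℝ)/4) a t) * hT

lemma obar_eq_Ff {N : ℕ} (hN : 2 ≤ N) (a : ℝ) {x : EuclideanSpace ℝ (Fin N)}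
    (h0 : 0 < ‖x‖) (h1 : ‖x‖ < 1) :
    obar hN a x = Ff N ⟨0, by omega⟩ (-(N:ℝ)/4) a x := by
  have hlog : Real.log ‖x‖ < 0 := Real.log_neg h0 h1
  unfold obar Ff pw
  rw [← Real.rpow_natCast ‖x‖ 2, ← Real.rpow_mul (norm_nonneg x),
      Real.log_rpow h0,
      show ((2:ℕ):ℝ) * (-(N:ℝ)/4) = -(N:ℝ)/2 by push_cast; ring,
      show -(((2:ℕ):ℝ) * Real.log ‖x‖)/2 = -Real.log ‖x‖ by push_cast; ring,
      abs_of_neg hlog]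
  ring


/-- `ω̄_a` solves
`-Δω̄_a - (N²/4)|y|⁻² ω̄_a + a(a-1)|y|⁻²|log|y||⁻² ω̄_a = 0`
on `{y ∈ ℝ^N_+ : 0 < |y| < 1}`. -/
theorem obar_solves (N : ℕ) (hN : 2 ≤ N) (a : ℝ)
    (y : EuclideanSpace ℝ (Fin N)) (hy1 : 0 < y ⟨0, by omega⟩)
    (hy0 : 0 < ‖y‖) (hylt : ‖y‖ < 1) :
    -lap (obar hN a) y - ((N : ℝ)^2/4) * ‖y‖⁻¹^2 * obar hN a y
      + a * (a - 1) * ‖y‖⁻¹^2 * |Real.log ‖y‖|⁻¹^2 * obar hN a y = 0 := by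
  classical
  set i0 : Fin N := (⟨0, by omega⟩ : Fin N) with hi0
  set t : ℝ := ‖y‖^2 with htdef
  obtain ⟨ht0, ht1⟩ : 0 < t ∧ t < 1 := norm_sq_mem hy0 hylt
  have hope : IsOpen {x : EuclideanSpace ℝ (Fin N) | 0 < ‖x‖ ∧ ‖x‖ < 1} :=
    isOpen_Ioo.preimage continuous_norm
  -- first derivatives of obar agree with Gf near y
  have hfd : ∀ i : Fin N,
      (fun x => fderiv ℝ (obar hN a) x (EuclideanSpace.single i 1)) =ᶠ[𝓝 y]
        (fun x => Gf N i0 i (-(N:ℝ)/4) a x) := by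
    intro i
    filter_upwards [hope.mem_nhds ⟨hy0, hylt⟩] with x hx
    have hobarF : obar hN a =ᶠ[𝓝 x] Ff N i0 (-(N:ℝ)/4) a := by
      filter_upwards [hope.mem_nhds hx] with z hz using obar_eq_Ff hN a hz.1 hz.2
    rw [hobarF.fderiv_eq, fderiv_Ff_apply i0 i (-(N:ℝ)/4) a hx.1 hx.2]
  -- compute the Laplacian
  have hlap : lap (obar hN a) y
      = y i0 * ((2*(N:ℝ)+4) * pwd1 (-(N:ℝ)/4) a t + 4*t*pwd2 (-(N:ℝ)/4) a t) := by
    unfold lap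
    have hval : ∀ i : Fin N,
        fderiv ℝ (fun x => fderiv ℝ (obar hN a) x (EuclideanSpace.single i 1)) y
          (EuclideanSpace.single i 1)
        = (if i = i0 then (4 * pwd1 (-(N:ℝ)/4) a t * y i) else 0)
          + (4 * y i0 * pwd2 (-(N:ℝ)/4) a t) * (y i)^2
          + 2 * pwd1 (-(N:ℝ)/4) a t * y i0 := by
      intro i
      rw [(hfd i).fderiv_eq, fderiv_Gf_apply i0 i (-(N:ℝ)/4) a hy0 hylt]
      by_cases h : i = i0 <;> simp [h] <;> ring
    rw [Finset.sum_congr rfl (fun i _ => hval i)]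
    have hsumsq : ∑ i, (y i)^2 = t := by
      rw [htdef, PiLp.norm_sq_eq_of_L2]
      simp [Real.norm_eq_abs, sq_abs]
    rw [Finset.sum_add_distrib, Finset.sum_add_distrib, Finset.sum_ite_eq' Finset.univ i0,
      ← Finset.mul_sum, hsumsq, Finset.sum_const, Finset.card_univ, Fintype.card_fin]
    simp only [Finset.mem_univ, if_true, nsmul_eq_mul]
    ring
  -- rewrite obar at y
  have hobary : obar hN a y = y i0 * pw (-(N:ℝ)/4) a t := obar_eq_Ff hN a hy0 hylt
  have habs : |Real.log ‖y‖| = -Real.log t / 2 := by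
    rw [htdef, Real.log_pow, abs_of_neg (Real.log_neg hy0 hylt)]
    push_cast; ring
  have hinv : ‖y‖⁻¹^2 = t⁻¹ := by rw [inv_pow, htdef]
  rw [hobary, habs, hinv, hlap, key_algebra N a ht0 ht1]
  ring
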